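/- Let $X$ be a Banach space, $f : [a,b] \to X$ differentiable with Bochner-integrable derivative, and $t \in [0,1]$. Then $\left\| \int_a^b f(s)\,ds - (b-a)\left[t f(b) + (1-t) f(a)\right] \right\| \le \left[\frac{1}{2}(b-a) + \left|tb+(1-t)a - \frac{a+b}{2}\right|\right]\int_a^b \|f'(s)\|\,ds$. -/

import Mathlib

open MeasureTheory intervalIntegral

theorem stmt12 {X : Type*} [NormedAddCommGroup X] [NormedSpace ℝ X] [CompleteSpace X]
    {a b : ℝ} (hab : a < b) {f f' : ℝ → X}
    (hderiv : ∀ t ∈ Set.Icc a b, HasDerivAt f (f' t) t)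
    (hint : IntervalIntegrable f' volume a b) {w : ℝ} (hw : w ∈ Set.Icc (0 : ℝ) 1) :
    ‖(∫ s in a..b, f s) - (b - a) • (w • f b + (1 - w) • f a)‖ ≤
      ((1 / 2) * (b - a) + |w * b + (1 - w) * a - (a + b) / 2|) * (∫ s in a..b, ‖f' s‖) := by
  have hab' : a ≤ b := hab.le
  set c : ℝ := (1 - w) * b + w * a with hc
  set M : ℝ := (1 / 2) * (b - a) + |w * b + (1 - w) * a - (a + b) / 2| with hM
  have hIcc : Set.uIcc a b = Set.Icc a b := Set.uIcc_of_le hab'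
  have hIoc : Set.uIoc a b = Set.Ioc a b := Set.uIoc_of_le hab'
  -- bound on |s - c| for s in [a,b]
  have hbound : ∀ s ∈ Set.Icc a b, |s - c| ≤ M := by
    intro s hs
    rw [hM, abs_le]
    rcases abs_cases (w * b + (1 - w) * a - (a + b) / 2) with ⟨h1, h2⟩ | ⟨h1, h2⟩ <;>
      rw [h1] <;> constructor <;> nlinarith [hs.1, hs.2, hw.1, hw.2, hc]
  -- integrability of the integrand |s-c| * ‖f' s‖
  have hint1 : IntervalIntegrable (fun s => |s - c| * ‖f' s‖) volume a b :=
    hint.norm.continuousOn_mul ((continuousOn_id.sub continuousOn_const).abs)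
  have hintg : IntervalIntegrable (fun s => (s - c) • f' s) volume a b := by
    apply hint1.mono_fun
    · exact (Continuous.aestronglyMeasurable (by continuity)).smul
        (intervalIntegrable_iff.1 hint).aestronglyMeasurable
    · filter_upwards with s
      simp [norm_smul, abs_abs]
  -- continuity of f on [a,b]
  have hfc : ContinuousOn f (Set.Icc a b) := fun s hs =>
    (hderiv s hs).continuousAt.continuousWithinAt
  have hintf : IntervalIntegrable f volume a b := by
    apply ContinuousOn.intervalIntegrable
    rwa [hIcc]
  -- integration by parts via FTC for g s = (s - c) • f s
  have key : (∫ s in a..b, (f s + (s - c) • f' s)) =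
      (b - c) • f b - (a - c) • f a := by
    have := intervalIntegral.integral_eq_sub_of_hasDerivAt
      (f := fun s => (s - c) • f s) (f' := fun s => f s + (s - c) • f' s)
      (a := a) (b := b) ?_ (hintf.add hintg)
    · exact this
    · intro s hs
      rw [hIcc] at hs
      have h1 : HasDerivAt (fun s : ℝ => s - c) 1 s := (hasDerivAt_id s).sub_const c
      have := h1.smul (hderiv s hs)
      exact (by simpa [one_smul, add_comm] using this : HasDerivAt ((fun s : ℝ => s - c) • f) (f s + (s - c) • f' s) s)
  have split : (∫ s in a..b, f s) - (b - a) • (w • f b + (1 - w) • f a) =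
      -(∫ s in a..b, (s - c) • f' s) := by
    have hsum : (∫ s in a..b, f s) + (∫ s in a..b, (s - c) • f' s) =
        (b - c) • f b - (a - c) • f a := by
      rw [← intervalIntegral.integral_add hintf hintg]; exact key
    have hbc : b - c = w * (b - a) := by rw [hc]; ring
    have hac : a - c = -((1 - w) * (b - a)) := by rw [hc]; ring
    have : (b - c) • f b - (a - c) • f a = (b - a) • (w • f b + (1 - w) • f a) := by
      rw [hbc, hac, smul_add, smul_smul, smul_smul, neg_smul, sub_neg_eq_add]
      ring_nf
    rw [this] at hsum
    linear_combination (norm := abel) hsum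
  rw [split, norm_neg]
  calc ‖∫ s in a..b, (s - c) • f' s‖ ≤ ∫ s in a..b, ‖(s - c) • f' s‖ :=
        intervalIntegral.norm_integral_le_integral_norm hab'
    _ = ∫ s in a..b, |s - c| * ‖f' s‖ := by simp [norm_smul]
    _ ≤ ∫ s in a..b, M * ‖f' s‖ := by
        apply intervalIntegral.integral_mono_on hab' hint1 (hint.norm.const_mul M)
        intro s hs
        exact mul_le_mul_of_nonneg_right (hbound s hs) (norm_nonneg _)
    _ = M * ∫ s in a..b, ‖f' s‖ := by rw [intervalIntegral.integral_const_mul]
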